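/- Let f, G and h be continuously differentiable. Then for every fixed x ∈ Ω_α, λ ∈ 𝕊^l and μ ∈ ℝ^s, the function c ↦ 𝓛(x,λ,μ,c) is nondecreasing on (0,+∞). -/

import Mathlib

open Filter Topology Set Bornology Matrix

attribute [local instance] Matrix.frobeniusNormedAddCommGroup Matrix.frobeniusNormedSpace

noncomputable section

variable {d l s : ℕ}

/-- A square real matrix is negative semidefinite iff its negation is positive semidefinite. -/
def Matrix.NegSemidef (A : Matrix (Fin l) (Fin l) ℝ) : Prop := (-A).PosSemidef

/-- The metric projection (in the Frobenius norm) of a symmetric matrix onto the closed convex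
cone of positive semidefinite matrices. -/
def psdProj (A : Matrix (Fin l) (Fin l) ℝ) : Matrix (Fin l) (Fin l) ℝ :=
  Classical.epsilon fun B : Matrix (Fin l) (Fin l) ℝ => B.PosSemidef ∧
    ∀ C : Matrix (Fin l) (Fin l) ℝ, C.PosSemidef →
      ((A - B) * (A - B)ᵀ).trace ≤ ((A - C) * (A - C)ᵀ).trace

/-- The standard Lagrangian of the nonlinear semidefinite programming problem. -/
def sdpLagrangian (f : EuclideanSpace ℝ (Fin d) → ℝ)
    (G : EuclideanSpace ℝ (Fin d) → Matrix (Fin l) (Fin l) ℝ)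
    (h : EuclideanSpace ℝ (Fin d) → EuclideanSpace ℝ (Fin s))
    (x : EuclideanSpace ℝ (Fin d)) (lam : Matrix (Fin l) (Fin l) ℝ)
    (mu : EuclideanSpace ℝ (Fin s)) : ℝ :=
  f x + (lam * G x).trace + inner ℝ mu (h x)

/-- The function `η (x, λ, μ) = ‖∇ₓ L (x, λ, μ)‖² + tr (λ² G(x)²)`. -/
def sdpEta (f : EuclideanSpace ℝ (Fin d) → ℝ)
    (G : EuclideanSpace ℝ (Fin d) → Matrix (Fin l) (Fin l) ℝ)
    (h : EuclideanSpace ℝ (Fin d) → EuclideanSpace ℝ (Fin s))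
    (x : EuclideanSpace ℝ (Fin d)) (lam : Matrix (Fin l) (Fin l) ℝ)
    (mu : EuclideanSpace ℝ (Fin s)) : ℝ :=
  ‖gradient (fun y => sdpLagrangian f G h y lam mu) x‖ ^ 2 + (lam ^ 2 * (G x) ^ 2).trace

variable (f : EuclideanSpace ℝ (Fin d) → ℝ)
    (G : EuclideanSpace ℝ (Fin d) → Matrix (Fin l) (Fin l) ℝ)
    (h : EuclideanSpace ℝ (Fin d) → EuclideanSpace ℝ (Fin s)) (α κ : ℝ)

/-- `a (x) = α − tr([G(x)]₊²)^κ`. -/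
def sdpA (x : EuclideanSpace ℝ (Fin d)) : ℝ := α - ((psdProj (G x) ^ 2).trace) ^ κ

/-- `b (x) = α − ‖h(x)‖²`. -/
def sdpB (x : EuclideanSpace ℝ (Fin d)) : ℝ := α - ‖h x‖ ^ 2

/-- `p (x, λ) = a(x) / (1 + tr(λ²))`. -/
def sdpP (x : EuclideanSpace ℝ (Fin d)) (lam : Matrix (Fin l) (Fin l) ℝ) : ℝ :=
  sdpA G α κ x / (1 + (lam ^ 2).trace)

/-- `q (x, μ) = b(x) / (1 + ‖μ‖²)`. -/
def sdpQ (x : EuclideanSpace ℝ (Fin d)) (mu : EuclideanSpace ℝ (Fin s)) : ℝ :=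
  sdpB h α x / (1 + ‖mu‖ ^ 2)

open Classical in
/-- The continuously differentiable augmented Lagrangian `𝓛 (x, λ, μ, c)` for the nonlinear
semidefinite programming problem. -/
def sdpAugLagrangian (x : EuclideanSpace ℝ (Fin d)) (lam : Matrix (Fin l) (Fin l) ℝ)
    (mu : EuclideanSpace ℝ (Fin s)) (c : ℝ) : EReal :=
  if 0 < sdpA G α κ x ∧ 0 < sdpB h α x then
    ((f x
      + (1 / (2 * c * sdpP G α κ x lam)) *
        ((psdProj (c • G x + sdpP G α κ x lam • lam) ^ 2).trace
          - (sdpP G α κ x lam) ^ 2 * (lam ^ 2).trace)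
      + inner ℝ mu (h x) + (c / (2 * sdpQ h α x mu)) * ‖h x‖ ^ 2
      + sdpEta f G h x lam mu : ℝ) : EReal)
  else ⊤

/-- The feasible set of the nonlinear semidefinite programming problem. -/
def sdpFeasible : Set (EuclideanSpace ℝ (Fin d)) := {x | (G x).NegSemidef ∧ h x = 0}

/-- The set of globally optimal solutions of the nonlinear semidefinite programming problem. -/
def sdpOptimal : Set (EuclideanSpace ℝ (Fin d)) :=
  {x ∈ sdpFeasible G h | ∀ y ∈ sdpFeasible G h, f x ≤ f y}

/-- `(x, λ, μ)` is a global minimizer of `𝓛 (·, ·, ·, c)` over `ℝ^d × 𝕊^l × ℝ^s`. -/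
def sdpGlobMin (c : ℝ) (x : EuclideanSpace ℝ (Fin d)) (lam : Matrix (Fin l) (Fin l) ℝ)
    (mu : EuclideanSpace ℝ (Fin s)) : Prop :=
  lam.IsSymm ∧ ∀ x' lam' mu', (lam' : Matrix (Fin l) (Fin l) ℝ).IsSymm →
    sdpAugLagrangian f G h α κ x lam mu c ≤ sdpAugLagrangian f G h α κ x' lam' mu' c

/-- The augmented Lagrangian `𝓛` is globally extendedly exact (with respect to `η`). -/
def sdpGloballyExtendedlyExact : Prop :=
  ∃ c₀ > (0 : ℝ), ∀ c ≥ c₀,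
    (∀ x lam mu, sdpGlobMin f G h α κ c x lam mu →
      sdpEta f G h x lam mu = 0 ∧ x ∈ sdpOptimal f G h) ∧
    (∀ x ∈ sdpOptimal f G h, ∀ (lam : Matrix (Fin l) (Fin l) ℝ) mu, lam.IsSymm →
      sdpEta f G h x lam mu = 0 → sdpGlobMin f G h α κ c x lam mu)

/-- The augmented Lagrangian `𝓛` is locally extendedly exact at `xs`. -/
def sdpLocallyExtendedlyExactAt (xs : EuclideanSpace ℝ (Fin d)) : Prop :=
  ∀ (lam : Matrix (Fin l) (Fin l) ℝ) mu, lam.IsSymm → sdpEta f G h xs lam mu = 0 →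
    ∃ c₀ > (0 : ℝ), ∃ U ∈ 𝓝 ((xs, lam, mu) :
        EuclideanSpace ℝ (Fin d) × Matrix (Fin l) (Fin l) ℝ × EuclideanSpace ℝ (Fin s)),
      ∀ x lam' mu', (x, lam', mu') ∈ U → (lam' : Matrix (Fin l) (Fin l) ℝ).IsSymm →
        ∀ c ≥ c₀, sdpAugLagrangian f G h α κ xs lam mu c ≤ sdpAugLagrangian f G h α κ x lam' mu' c

/-- The augmented Lagrangian `𝓛` is non-degenerate. -/
def sdpNonDegenerate : Prop :=
  ∃ c₀ > (0 : ℝ), ∃ R > (0 : ℝ), ∀ c ≥ c₀, ∃ x lam mu,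
    sdpGlobMin f G h α κ c x lam mu ∧ ‖x‖ + ‖lam‖ + ‖mu‖ ≤ R

/-- `(x, λ, μ)` is a KKT point of the nonlinear semidefinite programming problem. -/
def sdpKKT (x : EuclideanSpace ℝ (Fin d)) (lam : Matrix (Fin l) (Fin l) ℝ)
    (mu : EuclideanSpace ℝ (Fin s)) : Prop :=
  lam.IsSymm ∧ (G x).NegSemidef ∧ h x = 0 ∧ lam.PosSemidef ∧ (lam * G x).trace = 0 ∧
    gradient (fun y => sdpLagrangian f G h y lam mu) x = 0

/-- A feasible point `x` is nondegenerate: for some basis `e₁, …, e_{l-r}` of the null space of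
`G(x)` (where `r = rank G(x)`), the vectors `vᵢⱼ = (eᵢᵀ (∂G/∂x₁)(x) eⱼ, …, eᵢᵀ (∂G/∂x_d)(x) eⱼ)`,
`1 ≤ i ≤ j ≤ l - r`, together with the gradients `∇hₖ(x)`, `k = 1, …, s`, are linearly
independent. -/
def sdpNondegeneratePoint (x : EuclideanSpace ℝ (Fin d)) : Prop :=
  ∃ e : Module.Basis (Fin (l - (G x).rank)) ℝ (LinearMap.ker (Matrix.mulVecLin (G x))),
    LinearIndependent ℝ
      (fun idx : {pr : Fin (l - (G x).rank) × Fin (l - (G x).rank) // pr.1 ≤ pr.2} ⊕ Fin s =>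
        Sum.elim
          (fun pr : {pr : Fin (l - (G x).rank) × Fin (l - (G x).rank) // pr.1 ≤ pr.2} =>
            fun k : Fin d =>
              (e pr.1.1 : Fin l → ℝ) ⬝ᵥ
                (fderiv ℝ G x (EuclideanSpace.single k 1)) *ᵥ (e pr.1.2 : Fin l → ℝ))
          (fun j : Fin s => fun k : Fin d =>
            fderiv ℝ (fun y => h y j) x (EuclideanSpace.single k 1))
          idx)


def mip (A B : Matrix (Fin l) (Fin l) ℝ) : ℝ := (A * Bᵀ).trace

lemma mip_eq_sum (A B : Matrix (Fin l) (Fin l) ℝ) :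
    mip A B = ∑ i, ∑ j, A i j * B i j := by
  simp [mip, Matrix.trace, Matrix.mul_apply, Matrix.diag]

lemma mip_comm (A B : Matrix (Fin l) (Fin l) ℝ) : mip A B = mip B A := by
  simp only [mip_eq_sum, mul_comm]

lemma mip_self_nonneg (A : Matrix (Fin l) (Fin l) ℝ) : 0 ≤ mip A A := by
  rw [mip_eq_sum]
  exact Finset.sum_nonneg fun i _ => Finset.sum_nonneg fun j _ => mul_self_nonneg _

lemma mip_sub_left (A B C : Matrix (Fin l) (Fin l) ℝ) :
    mip (A - B) C = mip A C - mip B C := by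
  simp [mip_eq_sum, Matrix.sub_apply, sub_mul, Finset.sum_sub_distrib]

lemma mip_add_left (A B C : Matrix (Fin l) (Fin l) ℝ) :
    mip (A + B) C = mip A C + mip B C := by
  simp [mip_eq_sum, Matrix.add_apply, add_mul, Finset.sum_add_distrib]

lemma mip_smul_left (t : ℝ) (A C : Matrix (Fin l) (Fin l) ℝ) :
    mip (t • A) C = t * mip A C := by
  simp [mip_eq_sum, Matrix.smul_apply, Finset.mul_sum, mul_assoc]

lemma norm_sq_eq_mip (A : Matrix (Fin l) (Fin l) ℝ) : ‖A‖ ^ 2 = mip A A := by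
  rw [mip_eq_sum, Matrix.frobenius_norm_def]
  rw [← Real.rpow_natCast _ 2, ← Real.rpow_mul (by positivity)]
  norm_num [sq]

lemma cont_entry (i j : Fin l) : Continuous fun C : Matrix (Fin l) (Fin l) ℝ => C i j :=
  (continuous_apply j).comp (continuous_apply i)

lemma isClosed_psd : IsClosed {C : Matrix (Fin l) (Fin l) ℝ | C.PosSemidef} := by
  have h1 : {C : Matrix (Fin l) (Fin l) ℝ | C.PosSemidef} =
      {C | C.IsHermitian} ∩ ⋂ v : Fin l → ℝ, {C | 0 ≤ dotProduct (star v) (C *ᵥ v)} := by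
    ext C
    simp [Matrix.posSemidef_iff_dotProduct_mulVec, Set.mem_iInter]
  rw [h1]
  refine IsClosed.inter ?_ (isClosed_iInter fun v => ?_)
  · have : {C : Matrix (Fin l) (Fin l) ℝ | C.IsHermitian} =
        ⋂ p : (Fin l) × (Fin l), {C | C p.1 p.2 = C p.2 p.1} := by
      ext C
      simp only [Set.mem_setOf_eq, Set.mem_iInter, Matrix.IsHermitian]
      constructor
      · intro h p
        have := congrFun (congrFun h p.1) p.2
        simpa [Matrix.conjTranspose_apply] using this.symm
      · intro h; ext i j
        simpa [Matrix.conjTranspose_apply] using (h (i, j)).symm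
    rw [this]
    exact isClosed_iInter fun p =>
      isClosed_eq (cont_entry _ _) (cont_entry _ _)
  · have : Continuous fun C : Matrix (Fin l) (Fin l) ℝ => dotProduct (star v) (C *ᵥ v) := by
      simp only [dotProduct, Matrix.mulVec, dotProduct]
      exact continuous_finset_sum _ fun i _ => (continuous_const.mul
        (continuous_finset_sum _ fun j _ => (cont_entry i j).mul continuous_const))
    exact isClosed_le continuous_const this
lemma cont_mipAC (A : Matrix (Fin l) (Fin l) ℝ) :
    Continuous fun C : Matrix (Fin l) (Fin l) ℝ => mip (A - C) (A - C) := by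
  simp only [mip_eq_sum]
  exact continuous_finset_sum _ fun i _ => continuous_finset_sum _ fun j _ =>
    ((continuous_const.sub (cont_entry i j)).mul (continuous_const.sub (cont_entry i j)))

lemma exists_psdProj (A : Matrix (Fin l) (Fin l) ℝ) :
    ∃ B : Matrix (Fin l) (Fin l) ℝ, B.PosSemidef ∧
      ∀ C : Matrix (Fin l) (Fin l) ℝ, C.PosSemidef →
        ((A - B) * (A - B)ᵀ).trace ≤ ((A - C) * (A - C)ᵀ).trace := by
  haveI : ProperSpace (Matrix (Fin l) (Fin l) ℝ) := FiniteDimensional.proper ℝ _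
  set K := {C : Matrix (Fin l) (Fin l) ℝ | C.PosSemidef} ∩ Metric.closedBall A ‖A‖ with hK
  have hzero : (0 : Matrix (Fin l) (Fin l) ℝ) ∈ K := by
    constructor
    · exact Matrix.PosSemidef.zero
    · simp [Metric.mem_closedBall, dist_eq_norm]
  have hcpt : IsCompact K := (isCompact_closedBall A ‖A‖).inter_left isClosed_psd
  obtain ⟨B, hBK, hBmin⟩ := hcpt.exists_isMinOn ⟨0, hzero⟩ (cont_mipAC A).continuousOn
  refine ⟨B, hBK.1, fun C hC => ?_⟩
  show mip (A - B) (A - B) ≤ mip (A - C) (A - C)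
  by_cases hball : C ∈ Metric.closedBall A ‖A‖
  · exact hBmin ⟨hC, hball⟩
  · have h0 : mip (A - B) (A - B) ≤ mip (A - 0) (A - 0) := hBmin hzero
    have h1 : ‖A - C‖ > ‖A‖ := by
      rw [Metric.mem_closedBall, dist_eq_norm, norm_sub_rev] at hball
      linarith [not_le.mp hball]
    have h2 : mip (A - 0) (A - 0) ≤ mip (A - C) (A - C) := by
      rw [← norm_sq_eq_mip, ← norm_sq_eq_mip, sub_zero]
      have : (0:ℝ) ≤ ‖A‖ := norm_nonneg _
      nlinarith [norm_nonneg (A - C)]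
    exact le_trans h0 h2
lemma psdProj_spec (A : Matrix (Fin l) (Fin l) ℝ) :
    (psdProj A).PosSemidef ∧ ∀ C : Matrix (Fin l) (Fin l) ℝ, C.PosSemidef →
      ((A - psdProj A) * (A - psdProj A)ᵀ).trace ≤ ((A - C) * (A - C)ᵀ).trace :=
  Classical.epsilon_spec (exists_psdProj A)

lemma psd_smul_nonneg {P : Matrix (Fin l) (Fin l) ℝ} (h : P.PosSemidef) {t : ℝ} (ht : 0 ≤ t) :
    (t • P).PosSemidef := by
  constructor
  · show (t • P)ᴴ = t • P
    rw [Matrix.conjTranspose_smul, h.1, star_trivial]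
  · exact (Matrix.PosSemidef.smul h ht).2

lemma mip_sub_right (A B C : Matrix (Fin l) (Fin l) ℝ) :
    mip A (B - C) = mip A B - mip A C := by
  rw [mip_comm, mip_sub_left, mip_comm B A, mip_comm C A]

lemma mip_smul_right (t : ℝ) (A C : Matrix (Fin l) (Fin l) ℝ) :
    mip A (t • C) = t * mip A C := by
  rw [mip_comm, mip_smul_left, mip_comm]

lemma mip_expand (X Y : Matrix (Fin l) (Fin l) ℝ) :
    mip (X - Y) (X - Y) = mip X X - 2 * mip X Y + mip Y Y := by
  rw [mip_sub_left, mip_sub_right, mip_sub_right, mip_comm Y X]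
  ring

lemma mip_proj (X : Matrix (Fin l) (Fin l) ℝ) :
    mip X (psdProj X) = mip (psdProj X) (psdProj X) := by
  obtain ⟨hP, hmin⟩ := psdProj_spec X
  set P := psdProj X with hPdef
  set ip := mip X P with hip
  set qP := mip P P with hqP
  have T : ∀ t : ℝ, 0 ≤ t →
      mip X X - 2 * ip + qP ≤ mip X X - 2 * (t * ip) + t ^ 2 * qP := by
    intro t ht
    have := hmin (t • P) (psd_smul_nonneg hP ht)
    have e1 : ((X - P) * (X - P)ᵀ).trace = mip (X - P) (X - P) := rfl
    have e2 : ((X - t • P) * (X - t • P)ᵀ).trace = mip (X - t • P) (X - t • P) := rfl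
    rw [e1, e2, mip_expand, mip_expand] at this
    rw [mip_smul_right, mip_smul_left, mip_smul_right] at this
    calc mip X X - 2 * ip + qP ≤ _ := this
    _ = mip X X - 2 * (t * ip) + t ^ 2 * qP := by rw [← hip, ← hqP]; ring
  have h0 : qP ≤ 2 * ip := by have := T 0 le_rfl; simp at this; linarith
  have hqPnn : 0 ≤ qP := mip_self_nonneg P
  rcases eq_or_lt_of_le hqPnn with hq0 | hqpos
  · have h2 : ip ≤ 0 := by have := T 2 (by norm_num); nlinarith
    have : ip = 0 := le_antisymm h2 (by linarith)
    rw [hip] at this ⊢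
    rw [this, ← hq0]
  · have hne : qP ≠ 0 := ne_of_gt hqpos
    have hT := T (ip / qP) (div_nonneg (by linarith) hqpos.le)
    have ht' : ip / qP * qP = ip := div_mul_cancel₀ _ hne
    have key : qP * (ip / qP - 1) ^ 2 ≤ 0 := by nlinarith [ht', hT]
    have h1 : (ip / qP - 1) ^ 2 ≤ 0 := nonpos_of_mul_nonpos_right ?_ hqpos
    · have h2 : ip / qP - 1 = 0 := by nlinarith [sq_nonneg (ip / qP - 1)]
      have : ip / qP = 1 := by linarith
      calc ip = ip / qP * qP := ht'.symm
      _ = qP := by rw [this]; ring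
    · linarith
lemma sdp_key (A Λ : Matrix (Fin l) (Fin l) ℝ) {c₁ c₂ : ℝ} (h1 : 0 < c₁) (h12 : c₁ ≤ c₂) :
    (mip (psdProj (c₁ • A + Λ)) (psdProj (c₁ • A + Λ)) - mip Λ Λ) / (2 * c₁) ≤
    (mip (psdProj (c₂ • A + Λ)) (psdProj (c₂ • A + Λ)) - mip Λ Λ) / (2 * c₂) := by
  have h2 : 0 < c₂ := lt_of_lt_of_le h1 h12
  set X₁ := c₁ • A + Λ with hX₁
  set X₂ := c₂ • A + Λ with hX₂
  set P₁ := psdProj X₁ with hP₁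
  set P₂ := psdProj X₂ with hP₂
  have o₁ : mip X₁ P₁ = mip P₁ P₁ := mip_proj X₁
  have o₂ : mip X₂ P₂ = mip P₂ P₂ := mip_proj X₂
  have hm : mip (X₂ - P₂) (X₂ - P₂) ≤ mip (X₂ - P₁) (X₂ - P₁) :=
    (psdProj_spec X₂).2 P₁ (psdProj_spec X₁).1
  have e₁ : mip X₁ P₁ = c₁ * mip A P₁ + mip Λ P₁ := by
    rw [hX₁, mip_add_left, mip_smul_left]
  have e₂ : mip X₂ P₁ = c₂ * mip A P₁ + mip Λ P₁ := by
    rw [hX₂, mip_add_left, mip_smul_left]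
  set u := mip A P₁
  set v := mip Λ P₁
  set L := mip Λ Λ
  set a1 := mip P₁ P₁
  set a2 := mip P₂ P₂
  have ha1 : a1 = c₁ * u + v := by rw [← o₁, e₁]
  have hm' : 2 * (c₂ * u + v) - a1 ≤ a2 := by
    rw [mip_expand, mip_expand, o₂, e₂] at hm
    linarith
  have hr : 0 ≤ a1 - 2 * v + L := by
    have := mip_self_nonneg (P₁ - Λ)
    rw [mip_expand, mip_comm P₁ Λ] at this
    linarith
  rw [div_le_div_iff₀ (by linarith) (by linarith)]
  nlinarith [mul_nonneg (sub_nonneg.mpr h12) hr, mul_pos h1 h2]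

lemma herm_transpose {M : Matrix (Fin l) (Fin l) ℝ} (h : M.IsHermitian) : Mᵀ = M := by
  ext i j
  simp only [Matrix.transpose_apply]
  simpa [Matrix.conjTranspose_apply] using congrFun (congrFun h i) j

lemma sq_trace_eq_mip {M : Matrix (Fin l) (Fin l) ℝ} (hM : Mᵀ = M) :
    (M ^ 2).trace = mip M M := by
  rw [sq]; unfold mip; rw [hM]

/-- For fixed `(x, λ, μ)` with `x ∈ Ω_α`, the augmented Lagrangian `𝓛 (x, λ, μ, c)` is
nondecreasing in the penalty parameter `c` on `(0, +∞)`. -/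
theorem sdp_augLagrangian_monotone_in_c
    (hf : ContDiff ℝ 1 f) (hG : ContDiff ℝ 1 G) (hh : ContDiff ℝ 1 h)
    (hGsymm : ∀ x, (G x).IsSymm)
    (hα : 0 < α) (hκ : 1 ≤ κ)
    (x : EuclideanSpace ℝ (Fin d)) (lam : Matrix (Fin l) (Fin l) ℝ)
    (mu : EuclideanSpace ℝ (Fin s))
    (hsym : lam.IsSymm) (ha : 0 < sdpA G α κ x) (hb : 0 < sdpB h α x) :
    ∀ c₁ c₂ : ℝ, 0 < c₁ → c₁ ≤ c₂ →
      sdpAugLagrangian f G h α κ x lam mu c₁ ≤ sdpAugLagrangian f G h α κ x lam mu c₂ := by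
  intro c₁ c₂ hc₁ hc12
  have hc₂ : 0 < c₂ := lt_of_lt_of_le hc₁ hc12
  unfold sdpAugLagrangian
  rw [if_pos ⟨ha, hb⟩, if_pos ⟨ha, hb⟩]
  apply EReal.coe_le_coe_iff.mpr
  set p := sdpP G α κ x lam with hp
  set q := sdpQ h α x mu with hq
  have hlam : (lam ^ 2).trace = mip lam lam := sq_trace_eq_mip hsym
  have hpp : 0 < p := by
    rw [hp]; unfold sdpP
    apply div_pos ha
    rw [hlam]
    linarith [mip_self_nonneg lam]
  have hqq : 0 < q := by
    rw [hq]; unfold sdpQ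
    apply div_pos hb
    positivity
  have hT2 : c₁ / (2 * q) * ‖h x‖ ^ 2 ≤ c₂ / (2 * q) * ‖h x‖ ^ 2 :=
    mul_le_mul_of_nonneg_right
      ((div_le_div_iff_of_pos_right (by linarith : (0:ℝ) < 2 * q)).mpr hc12) (sq_nonneg _)
  have hL : p ^ 2 * (lam ^ 2).trace = mip (p • lam) (p • lam) := by
    rw [hlam, mip_smul_left, mip_smul_right]; ring
  have hKey := sdp_key (G x) (p • lam) hc₁ hc12
  have htr : ∀ c : ℝ, (psdProj (c • G x + p • lam) ^ 2).trace =
      mip (psdProj (c • G x + p • lam)) (psdProj (c • G x + p • lam)) := fun c =>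
    sq_trace_eq_mip (herm_transpose (psdProj_spec _).1.1)
  have hrw : ∀ c : ℝ, 0 < c → ∀ Z : ℝ, 1 / (2 * c * p) * Z = Z / (2 * c) / p := by
    intro c hc Z
    field_simp
  have hT1 : 1 / (2 * c₁ * p) *
        ((psdProj (c₁ • G x + p • lam) ^ 2).trace - p ^ 2 * (lam ^ 2).trace) ≤
      1 / (2 * c₂ * p) *
        ((psdProj (c₂ • G x + p • lam) ^ 2).trace - p ^ 2 * (lam ^ 2).trace) := by
    rw [htr c₁, htr c₂, hL, hrw c₁ hc₁ _, hrw c₂ hc₂ _]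
    exact (div_le_div_iff_of_pos_right hpp).mpr hKey
  linarith [hT1, hT2]


end
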